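/- Let G be the progressive enlargement of F by a random time θ. For any two finite G-stopping times σ̂ ≤ τ̂ there exist finite F-stopping times σ ≤ τ such that σ ∧ θ = σ̂ ∧ θ and τ ∧ θ = τ̂ ∧ θ almost surely. -/

import Mathlib

open MeasureTheory Filter Set

/-- If `𝒢` is the progressive enlargement of `𝒻` by a random time `θ`
(encoded via `𝒻 ⊆ 𝒢`, `θ` a `𝒢`-stopping time, and the classical reduction fact that any
`𝒢`-stopping time agrees with an `𝒻`-stopping time before `θ`), then for any two finite
`𝒢`-stopping times `σ̂ ≤ τ̂` there are finite `𝒻`-stopping times `σ ≤ τ` with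
`σ ∧ θ = σ̂ ∧ θ` and `τ ∧ θ = τ̂ ∧ θ` a.s. -/
theorem reduction_of_ordered_stopping_times
    {Ω : Type*} {m0 : MeasurableSpace Ω} (μ : Measure Ω) [IsProbabilityMeasure μ]
    (𝒻 𝒢 : Filtration ℝ m0) (θ : Ω → ℝ) (hθpos : ∀ ω, 0 < θ ω)
    (hFG : ∀ t, 𝒻 t ≤ 𝒢 t) (hθG : IsStoppingTime 𝒢 (fun ω => (θ ω : WithTop ℝ)))
    (hred : ∀ ρ : Ω → ℝ, IsStoppingTime 𝒢 (fun ω => (ρ ω : WithTop ℝ)) →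
      ∃ r : Ω → ℝ, IsStoppingTime 𝒻 (fun ω => (r ω : WithTop ℝ)) ∧ ∀ᵐ ω ∂μ, min (r ω) (θ ω) = min (ρ ω) (θ ω))
    (sigmahat tauhat : Ω → ℝ)
    (hsig : IsStoppingTime 𝒢 (fun ω => (sigmahat ω : WithTop ℝ))) (htau : IsStoppingTime 𝒢 (fun ω => (tauhat ω : WithTop ℝ)))
    (hle : sigmahat ≤ tauhat) :
    ∃ σ τ : Ω → ℝ, IsStoppingTime 𝒻 (fun ω => (σ ω : WithTop ℝ)) ∧ IsStoppingTime 𝒻 (fun ω => (τ ω : WithTop ℝ)) ∧ σ ≤ τ ∧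
      (∀ᵐ ω ∂μ, min (σ ω) (θ ω) = min (sigmahat ω) (θ ω)) ∧
      (∀ᵐ ω ∂μ, min (τ ω) (θ ω) = min (tauhat ω) (θ ω)) := by
  obtain ⟨r, hr, hrae⟩ := hred sigmahat hsig
  obtain ⟨s, hs, hsae⟩ := hred tauhat htau
  refine ⟨fun ω => min (r ω) (s ω), s, (by exact hr.min hs), hs, fun ω => min_le_right _ _, ?_, hsae⟩
  filter_upwards [hrae, hsae] with ω h1 h2
  have : min (min (r ω) (s ω)) (θ ω) = min (min (r ω) (θ ω)) (min (s ω) (θ ω)) := by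
    rw [min_min_min_comm, min_self]
  rw [this, h1, h2, ← min_min_min_comm, min_self]
  rw [min_eq_left (hle ω)]
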